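/- Let P ∈ ℝ^{N×N} be a row-stochastic matrix, let α ∈ (0,1), and let π_0 be a probability vector. Then there exists a probability vector v such that the PageRank vector satisfies π(α,v) = π_0 if and only if (π_0)_j > α (π_0^T P)_j for every j ∈ {1,...,N}. -/

import Mathlib

open Matrix

/-- `P` is row-stochastic: nonnegative entries, each row summing to 1. -/
def IsStochastic {N : ℕ} (P : Matrix (Fin N) (Fin N) ℝ) : Prop :=
  (∀ i j, 0 ≤ P i j) ∧ ∀ i, ∑ j, P i j = 1

/-- `v` is a probability vector: strictly positive entries summing to 1. -/
def IsProbVec {N : ℕ} (v : Fin N → ℝ) : Prop :=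
  (∀ i, 0 < v i) ∧ ∑ i, v i = 1

/-- The Google matrix `αP + (1-α) e vᵀ`. -/
def googleMatrix {N : ℕ} (α : ℝ) (P : Matrix (Fin N) (Fin N) ℝ) (v : Fin N → ℝ) :
    Matrix (Fin N) (Fin N) ℝ :=
  α • P + (1 - α) • Matrix.of fun _ j => v j

/-- For a row-stochastic `P`, `α ∈ (0,1)` and a probability vector `π₀`, there
exists a probability vector `v` whose PageRank vector is `π₀` (i.e. `π₀` is fixed by the
Google matrix `αP + (1-α) e vᵀ`) if and only if `(π₀)_j > α (π₀ᵀ P)_j` for every `j`. -/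
theorem personalization_vector_existence {N : ℕ} (P : Matrix (Fin N) (Fin N) ℝ)
    (hP : IsStochastic P) (α : ℝ) (hα : α ∈ Set.Ioo (0 : ℝ) 1)
    (π₀ : Fin N → ℝ) (hπ₀ : IsProbVec π₀) :
    (∃ v : Fin N → ℝ, IsProbVec v ∧ Matrix.vecMul π₀ (googleMatrix α P v) = π₀) ↔
      ∀ j, α * Matrix.vecMul π₀ P j < π₀ j := by
  obtain ⟨hα0, hα1⟩ := hα
  have h1α : (0:ℝ) < 1 - α := by linarith
  have hkey : ∀ (v : Fin N → ℝ) j, Matrix.vecMul π₀ (googleMatrix α P v) j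
      = α * Matrix.vecMul π₀ P j + (1 - α) * v j := by
    intro v j
    simp only [googleMatrix, Matrix.vecMul, dotProduct, Matrix.add_apply,
      Matrix.smul_apply, Matrix.of_apply, smul_eq_mul]
    rw [Finset.sum_congr rfl (fun i _ => mul_add (π₀ i) _ _), Finset.sum_add_distrib]
    have h2 : ∑ i, π₀ i * ((1-α) * v j) = (1-α) * v j := by
      rw [← Finset.sum_mul, hπ₀.2, one_mul]
    rw [h2]
    congr 1
    rw [Finset.mul_sum]
    exact Finset.sum_congr rfl fun i _ => by ring
  constructor
  · rintro ⟨v, hv, hfix⟩ j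
    have h := congrFun hfix j
    rw [hkey] at h
    have hvj := hv.1 j
    nlinarith
  · intro h
    refine ⟨fun j => (π₀ j - α * Matrix.vecMul π₀ P j) / (1 - α),
      ⟨fun j => div_pos (by linarith [h j]) h1α, ?_⟩, ?_⟩
    · have hsum : ∑ j, Matrix.vecMul π₀ P j = 1 := by
        simp only [Matrix.vecMul, dotProduct]
        rw [Finset.sum_comm]
        calc ∑ i, ∑ j, π₀ i * P i j = ∑ i, π₀ i * ∑ j, P i j := by
              simp [Finset.mul_sum]
          _ = 1 := by simp [hP.2, hπ₀.2]
      rw [← Finset.sum_div, Finset.sum_sub_distrib, hπ₀.2, ← Finset.mul_sum, hsum]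
      field_simp
    · funext j
      rw [hkey]
      field_simp
      ring
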